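/- Let r, r₀ ∈ (0, 1], let α be a real number, and set ρ = (1 − r₀²)/(2r₀). If ρ² = r² + (ρ + r₀)² − 2r(ρ + r₀)·cos α, then 2r₀/(1 + r₀²) = cos α · 2r/(1 + r²). Equivalently, in tortoise coordinates where cos γ₀ = 2r₀/(1 + r₀²) and cos γ = 2r/(1 + r²), one has cos γ₀ = cos α · cos γ. -/

import Mathlib

open Real

/-- Law of cosines on the Poincaré disk: if a point at radius `r` lies on the encoding
geodesic whose gem is at radius `r₀` (a circular arc of radius `ρ = (1 − r₀²)/(2r₀)`),
at polar angle `α` from the gem, then `cos γ₀ = cos α · cos γ` in tortoise coordinates,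
i.e. `2r₀/(1 + r₀²) = cos α · 2r/(1 + r²)`. -/
theorem mimic_point_relation (r r₀ α : ℝ) (hr : r ∈ Set.Ioc 0 1)
    (hr₀ : r₀ ∈ Set.Ioc 0 1) (ρ : ℝ) (hρ : ρ = (1 - r₀ ^ 2) / (2 * r₀))
    (hlaw : ρ ^ 2 = r ^ 2 + (ρ + r₀) ^ 2 - 2 * r * (ρ + r₀) * Real.cos α) :
    2 * r₀ / (1 + r₀ ^ 2) = Real.cos α * (2 * r / (1 + r ^ 2)) := by
  obtain ⟨hr0, _⟩ := hr
  obtain ⟨hr₀0, _⟩ := hr₀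
  have h1 : (1 : ℝ) + r ^ 2 ≠ 0 := by positivity
  have h2 : (1 : ℝ) + r₀ ^ 2 ≠ 0 := by positivity
  subst hρ
  field_simp at hlaw ⊢
  have hk : (32 * r₀ ^ 4) * (2 * r₀ * (1 + r ^ 2)) =
      (32 * r₀ ^ 4) * (Real.cos α * (2 * r) * (1 + r₀ ^ 2)) := by
    linear_combination (-16 * r₀ ^ 3 : ℝ) * hlaw
  have := mul_left_cancel₀ (by positivity : (32 : ℝ) * r₀ ^ 4 ≠ 0) hk
  linarith [this]
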